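/- A finite matroid M has a circuit decomposition (a sequence of circuits C_1,...,C_t satisfying (E1) C_i − D_{i−1} ≠ ∅ and (E2) minimality of the lobes, with D_t = E) if and only if M has no bridges. Moreover, if M is bridgeless then every partial circuit decomposition extends to a circuit decomposition. -/

import Mathlib

/-- The rank of a set in a matroid: the size of a largest independent subset. -/
noncomputable def Matroid.rankOf {α : Type*} (M : Matroid α) (X : Set α) : ℕ :=
  sSup {n | ∃ I, I ⊆ X ∧ M.Indep I ∧ I.ncard = n}

/-- A circuit of a matroid is a minimal dependent set. -/
def Matroid.IsCircuitSet {α : Type*} (M : Matroid α) (C : Set α) : Prop :=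
  M.Dep C ∧ ∀ D ⊂ C, M.Indep D

/-- `D j = C 0 ∪ ⋯ ∪ C (j-1)`, the union of the first `j` circuits of a sequence. -/
def circUnion {α : Type*} (C : ℕ → Set α) (j : ℕ) : Set α := ⋃ i < j, C i

/-- `(C 0, …, C (t-1))` is a partial circuit decomposition of `M`: every `C i` is a
circuit, and for `i ≥ 1` the lobe `C i \ D i` is nonempty (E1) and inclusionwise minimal
among the lobes of circuits having a nonempty lobe (E2). -/
def Matroid.IsPartialCircDecomp {α : Type*} (M : Matroid α) (C : ℕ → Set α) (t : ℕ) : Prop :=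
  (∀ i < t, M.IsCircuitSet (C i)) ∧
  ∀ i, 1 ≤ i → i < t →
    C i \ circUnion C i ≠ ∅ ∧
    ∀ C', M.IsCircuitSet C' → C' \ circUnion C i ≠ ∅ →
      ¬ (C' \ circUnion C i ⊂ C i \ circUnion C i)

/-- A circuit decomposition is a partial circuit decomposition covering the ground set. -/
def Matroid.IsCircDecomp {α : Type*} (M : Matroid α) (C : ℕ → Set α) (t : ℕ) : Prop :=
  M.IsPartialCircDecomp C t ∧ circUnion C t = M.E

/-- A matroid is bridgeless if every element of the ground set lies in a circuit. -/
def Matroid.Bridgeless {α : Type*} (M : Matroid α) : Prop :=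
  ∀ e ∈ M.E, ∃ C, M.IsCircuitSet C ∧ e ∈ C

lemma circUnion_subset_ground {α : Type*} {M : Matroid α} {C : ℕ → Set α} {t : ℕ}
    (h : ∀ i < t, M.IsCircuitSet (C i)) : circUnion C t ⊆ M.E := by
  intro x hx
  simp only [circUnion, Set.mem_iUnion] at hx
  obtain ⟨i, hi, hxi⟩ := hx
  exact (h i hi).1.subset_ground hxi

lemma circUnion_congr {α : Type*} {C C' : ℕ → Set α} {t : ℕ}
    (h : ∀ i < t, C' i = C i) : circUnion C' t = circUnion C t := by
  unfold circUnion
  exact Set.iUnion₂_congr fun i hi => h i hi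

lemma circUnion_succ {α : Type*} (C : ℕ → Set α) (t : ℕ) :
    circUnion C (t + 1) = circUnion C t ∪ C t :=
  Set.biUnion_lt_succ C t

lemma extend_step {α : Type*} (M : Matroid α) [M.Finite] (hb : M.Bridgeless)
    (C : ℕ → Set α) (t : ℕ) (hpd : M.IsPartialCircDecomp C t)
    (hne : circUnion C t ≠ M.E) :
    ∃ C₁, M.IsPartialCircDecomp C₁ (t + 1) ∧ (∀ i < t, C₁ i = C i) ∧
      (M.E \ circUnion C₁ (t + 1)).ncard < (M.E \ circUnion C t).ncard := by
  set D := circUnion C t with hD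
  have hDsub : D ⊆ M.E := circUnion_subset_ground hpd.1
  obtain ⟨e, heE, heD⟩ := Set.exists_of_ssubset (hDsub.ssubset_of_ne hne)
  obtain ⟨C₀, hC₀, heC₀⟩ := hb e heE
  have hT : (Set.Nonempty {n | ∃ C', M.IsCircuitSet C' ∧ (C' \ D).Nonempty ∧ (C' \ D).ncard = n}) :=
    ⟨(C₀ \ D).ncard, C₀, hC₀, ⟨e, heC₀, heD⟩, rfl⟩
  obtain ⟨Cm, hCm, hCmne, hCmcard⟩ := Nat.sInf_mem hT
  have hgfin : M.E.Finite := M.ground_finite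
  -- minimality of Cm's lobe
  have hmin : ∀ C', M.IsCircuitSet C' → (C' \ D).Nonempty → ¬ (C' \ D ⊂ Cm \ D) := by
    intro C' hC' hne' hss
    have hfin : (Cm \ D).Finite := hgfin.subset ((Set.diff_subset).trans hCm.1.subset_ground)
    have hlt : (C' \ D).ncard < (Cm \ D).ncard := Set.ncard_lt_ncard hss hfin
    have : sInf {n | ∃ C', M.IsCircuitSet C' ∧ (C' \ D).Nonempty ∧ (C' \ D).ncard = n}
        ≤ (C' \ D).ncard := Nat.sInf_le ⟨C', hC', hne', rfl⟩
    omega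
  refine ⟨Function.update C t Cm, ?_, ?_, ?_⟩
  · have hagree : ∀ i < t, Function.update C t Cm i = C i := fun i hi =>
      Function.update_of_ne (Nat.ne_of_lt hi) _ _
    have hcu : ∀ i ≤ t, circUnion (Function.update C t Cm) i = circUnion C i := by
      intro i hi
      exact circUnion_congr fun j hj => hagree j (lt_of_lt_of_le hj hi)
    constructor
    · intro i hi
      rcases Nat.lt_succ_iff_lt_or_eq.mp hi with h | h
      · rw [hagree i h]; exact hpd.1 i h
      · subst h; rw [Function.update_self]; exact hCm
    · intro i h1 hi
      rcases Nat.lt_succ_iff_lt_or_eq.mp hi with h | h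
      · rw [hagree i h, hcu i h.le]
        exact hpd.2 i h1 h
      · subst h
        rw [Function.update_self, hcu _ le_rfl, ← hD]
        exact ⟨Set.nonempty_iff_ne_empty.mp hCmne,
          fun C' hC' hne' => hmin C' hC' (Set.nonempty_iff_ne_empty.mpr hne')⟩
  · intro i hi; exact Function.update_of_ne (Nat.ne_of_lt hi) _ _
  · have hcu : circUnion (Function.update C t Cm) (t + 1) = D ∪ Cm := by
      rw [circUnion_succ, Function.update_self,
        circUnion_congr (fun j hj => Function.update_of_ne (Nat.ne_of_lt hj) _ _)]
    rw [hcu]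
    apply Set.ncard_lt_ncard _ (hgfin.diff)
    constructor
    · exact Set.diff_subset_diff_right Set.subset_union_left
    · intro hsub
      obtain ⟨f, hfCm, hfD⟩ := hCmne
      have hfE : f ∈ M.E := hCm.1.subset_ground hfCm
      have : f ∈ M.E \ (D ∪ Cm) := hsub ⟨hfE, hfD⟩
      exact this.2 (Or.inr hfCm)

lemma extend_main {α : Type*} (M : Matroid α) [M.Finite] (hb : M.Bridgeless) :
    ∀ n (C : ℕ → Set α) (t : ℕ), (M.E \ circUnion C t).ncard ≤ n →
      M.IsPartialCircDecomp C t →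
      ∃ (C' : ℕ → Set α) (t' : ℕ), t ≤ t' ∧ (∀ i < t, C' i = C i) ∧
        M.IsCircDecomp C' t' := by
  intro n
  induction n with
  | zero =>
    intro C t hcard hpd
    refine ⟨C, t, le_rfl, fun _ _ => rfl, hpd, ?_⟩
    have hsub : circUnion C t ⊆ M.E := circUnion_subset_ground hpd.1
    have : M.E \ circUnion C t = ∅ := by
      have := (Set.ncard_eq_zero (M.ground_finite.diff)).mp (Nat.le_zero.mp hcard)
      exact this
    rw [Set.diff_eq_empty] at this
    exact hsub.antisymm this
  | succ n ih =>
    intro C t hcard hpd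
    by_cases hne : circUnion C t = M.E
    · exact ⟨C, t, le_rfl, fun _ _ => rfl, hpd, hne⟩
    · obtain ⟨C₁, hpd₁, hagree, hlt⟩ := extend_step M hb C t hpd hne
      obtain ⟨C', t', ht', hagree', hdec⟩ := ih C₁ (t + 1) (by omega) hpd₁
      exact ⟨C', t', by omega, fun i hi => (hagree' i (by omega)).trans (hagree i hi), hdec⟩

/-- A finite matroid has a circuit decomposition if and only if it is bridgeless;
moreover, if it is bridgeless then every partial circuit decomposition can be extended
to a circuit decomposition. -/
theorem circDecomp_iff_bridgeless {α : Type*} (M : Matroid α) [M.Finite] :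
    ((∃ C : ℕ → Set α, ∃ t : ℕ, M.IsCircDecomp C t) ↔ M.Bridgeless) ∧
    (M.Bridgeless → ∀ (C : ℕ → Set α) (t : ℕ), M.IsPartialCircDecomp C t →
      ∃ (C' : ℕ → Set α) (t' : ℕ), t ≤ t' ∧ (∀ i < t, C' i = C i) ∧
        M.IsCircDecomp C' t') := by
  constructor
  · constructor
    · rintro ⟨C, t, ⟨hpd, hcov⟩⟩ e heE
      rw [← hcov] at heE
      simp only [circUnion, Set.mem_iUnion] at heE
      obtain ⟨i, hi, hei⟩ := heE
      exact ⟨C i, hpd.1 i hi, hei⟩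
    · intro hb
      have h0 : M.IsPartialCircDecomp (fun _ => (∅ : Set α)) 0 :=
        ⟨fun i hi => absurd hi (Nat.not_lt_zero i), fun i h1 hi => absurd hi (Nat.not_lt_zero i)⟩
      obtain ⟨C', t', _, _, hdec⟩ :=
        extend_main M hb (M.E \ circUnion (fun _ => (∅ : Set α)) 0).ncard _ 0 le_rfl h0
      exact ⟨C', t', hdec⟩
  · intro hb C t hpd
    exact extend_main M hb (M.E \ circUnion C t).ncard C t le_rfl hpd
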